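/- Let {A_γ}_{γ∈Γ} be a direct system of commutative rings over a directed index set Γ such that for all δ ≤ γ the transition map A_δ → A_γ is pure (for every A_δ-module N, the induced map N → N ⊗_{A_δ} A_γ is injective). If every A_γ is Cohen–Macaulay in the sense of Hamilton–Marley, then the direct limit A = lim→_{γ∈Γ} A_γ is Cohen–Macaulay in the sense of Hamilton–Marley. -/

import Mathlib

set_option linter.unusedSectionVars false
set_option maxHeartbeats 1000000


open Finset in
/-- Degree `p+1 → p` part of the Koszul complex: the `p`-th module is the free module
on the `p`-element subsets of `Fin ℓ`. -/
noncomputable def koszulD {R : Type*} [CommRing R] {ℓ : ℕ} (x : Fin ℓ → R) (p : ℕ) :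
    ({s : Finset (Fin ℓ) // s.card = p + 1} → R) →ₗ[R]
      ({s : Finset (Fin ℓ) // s.card = p} → R) where
  toFun f t := ∑ i ∈ (t.1ᶜ).attach,
    ((-1 : R) ^ ((t.1.filter (fun j => j < i.1)).card)) * x i.1 *
      f ⟨insert i.1 t.1, by
        have hi : (i.1 : Fin ℓ) ∉ t.1 := Finset.mem_compl.mp i.2
        rw [Finset.card_insert_of_notMem hi, t.2]⟩
  map_add' f g := by
    funext t
    simp only [Pi.add_apply, mul_add, Finset.sum_add_distrib]
  map_smul' c f := by
    funext t
    simp only [Pi.smul_apply, smul_eq_mul, RingHom.id_apply, Finset.mul_sum]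
    exact Finset.sum_congr rfl fun i _ => by ring

/-- The standard chain map `K•(x^m) → K•(x^n)` (here `e = m - n`), which in degree `p`
multiplies the component indexed by a subset `s` by `∏_{i ∈ s} x iᵉ`;
it is induced by multiplication by `(x₁⋯x_ℓ)^(m-n)`. -/
noncomputable def koszulTransition {R : Type*} [CommRing R] {ℓ : ℕ} (x : Fin ℓ → R)
    (e : ℕ) (p : ℕ) :
    ({s : Finset (Fin ℓ) // s.card = p} → R) →ₗ[R]
      ({s : Finset (Fin ℓ) // s.card = p} → R) where
  toFun f t := (∏ i ∈ t.1, x i ^ e) * f t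
  map_add' f g := by funext t; simp [mul_add]
  map_smul' c f := by funext t; simp; ring

/-- `x` is weakly proregular: for each `n > 0` there is `m ≥ n` such that the induced maps
`H_i(K•(x^m)) → H_i(K•(x^n))` vanish for all `i ≥ 1`, i.e. every cycle of `K•(x^m)` in
degree `i ≥ 1` is sent to a boundary of `K•(x^n)`. -/
def IsWeakProregular {R : Type*} [CommRing R] {ℓ : ℕ} (x : Fin ℓ → R) : Prop :=
  ∀ n : ℕ, 0 < n → ∃ m, n ≤ m ∧
    ∀ (i : ℕ) (z : {s : Finset (Fin ℓ) // s.card = i + 1} → R),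
      koszulD (fun j => x j ^ m) i z = 0 →
      ∃ w : {s : Finset (Fin ℓ) // s.card = i + 2} → R,
        koszulD (fun j => x j ^ n) (i + 1) w = koszulTransition x (m - n) (i + 1) z

/-- The submodule of boundaries in the top spot `C^ℓ = R_{x₁⋯x_ℓ}` of the Čech complex on
`x₁, …, x_ℓ`: the sum over `j` of the images of the partial localizations
`R_{x₁⋯x̂ⱼ⋯x_ℓ} → R_{x₁⋯x_ℓ}`; the image of the `j`-th one is spanned by the elements
`(r * xⱼⁿ) / (x₁⋯x_ℓ)ⁿ`. -/
noncomputable def cechTopBoundaries {R : Type*} [CommRing R] {ℓ : ℕ} (x : Fin ℓ → R) :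
    Submodule R (Localization.Away (∏ i, x i)) :=
  ⨆ j : Fin ℓ, Submodule.span R
    {z | ∃ (r : R) (n : ℕ), z =
      algebraMap R (Localization.Away (∏ i, x i)) (r * x j ^ n) *
        (IsLocalization.Away.invSelf (S := Localization.Away (∏ i, x i)) (∏ i, x i)) ^ n}

/-- `x₁, …, x_ℓ` is a parameter sequence on `R`: (1) it is weakly proregular,
(2) `(x₁, …, x_ℓ)R ≠ R`, and (3) the localization of the top Čech cohomology
`H^ℓ_x(R) = R_{x₁⋯x_ℓ} / (Čech boundaries)` at every prime `P ⊇ (x)` is nonzero. -/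
def IsParameterSeq {R : Type*} [CommRing R] {ℓ : ℕ} (x : Fin ℓ → R) : Prop :=
  IsWeakProregular x ∧ Ideal.span (Set.range x) ≠ ⊤ ∧
  ∀ P : Ideal R, P.IsPrime → Ideal.span (Set.range x) ≤ P →
    ∃ z : Localization.Away (∏ i, x i), ∀ s ∉ P, s • z ∉ cechTopBoundaries x

/-- `x₁, …, x_ℓ` is a strong parameter sequence: `x₁, …, x_i` is a parameter sequence
for all `1 ≤ i ≤ ℓ`. -/
def IsStrongParameterSeq {R : Type*} [CommRing R] {ℓ : ℕ} (x : Fin ℓ → R) : Prop :=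
  ∀ i : ℕ, ∀ h : i ≤ ℓ, 0 < i → IsParameterSeq (fun j : Fin i => x (Fin.castLE h j))


open scoped TensorProduct in
/-- A ring homomorphism `f : R → S` is *pure* if for every `R`-module `N` the natural map
`N → N ⊗[R] S`, `x ↦ x ⊗ 1`, is injective (where `S` is an `R`-module via `f`). -/
def IsPureRingHom {R S : Type*} [CommRing R] [CommRing S] (f : R →+* S) : Prop :=
  ∀ (N : Type) [AddCommGroup N] [Module R N],
    Function.Injective
      (fun x : N => @TensorProduct.tmul R _ N S _ _ _ f.toModule x 1)

/-- A commutative ring is *Cohen–Macaulay in the sense of Hamilton–Marley* if every strong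
parameter sequence on it is a regular sequence. -/
def IsHamiltonMarleyCohenMacaulay (R : Type*) [CommRing R] : Prop :=
  ∀ (ℓ : ℕ) (x : Fin ℓ → R), IsStrongParameterSeq x →
    RingTheory.Sequence.IsRegular R (List.ofFn x)

-- ===== helper lemmas =====

lemma koszulD_ringHom {R S : Type*} [CommRing R] [CommRing S] (g : R →+* S) {ℓ : ℕ}
    (x : Fin ℓ → R) (p : ℕ) (v : {s : Finset (Fin ℓ) // s.card = p + 1} → R) :
    (fun t => g (koszulD x p v t)) = koszulD (fun j => g (x j)) p (fun t => g (v t)) := by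
  funext t
  simp only [koszulD, LinearMap.coe_mk, AddHom.coe_mk, map_sum, map_mul, map_pow, map_neg,
    map_one]

lemma koszulTransition_ringHom {R S : Type*} [CommRing R] [CommRing S] (g : R →+* S) {ℓ : ℕ}
    (x : Fin ℓ → R) (e p : ℕ) (v : {s : Finset (Fin ℓ) // s.card = p} → R) :
    (fun t => g (koszulTransition x e p v t)) =
      koszulTransition (fun j => g (x j)) e p (fun t => g (v t)) := by
  funext t
  simp only [koszulTransition, LinearMap.coe_mk, AddHom.coe_mk, map_mul, map_prod, map_pow]

open TensorProduct in
lemma IsPureRingHom.exists_preimage {R S : Type} [CommRing R] [CommRing S] {g : R →+* S}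
    (hg : IsPureRingHom g) {ι ι' : Type} [Fintype ι] [Fintype ι'] [DecidableEq ι]
    [DecidableEq ι']
    (d : (ι' → R) →ₗ[R] (ι → R)) (d' : (ι' → S) →ₗ[S] (ι → S))
    (hcompat : ∀ u : ι' → R, (fun t => g (d u t)) = d' (fun t => g (u t)))
    (u : ι → R) (v : ι' → S) (hv : d' v = fun t => g (u t)) :
    ∃ w : ι' → R, d w = u := by
  letI : Module R S := g.toModule
  classical
  set N := (ι → R) ⧸ LinearMap.range d with hN
  have hsmul : ∀ (r : R) (s : S), r • s = g r * s := fun r s => rfl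
  let Ψ : (ι → S) → ((ι → R) ⊗[R] S) := fun v => ∑ t : ι, Pi.single t (1 : R) ⊗ₜ[R] v t
  have key1 : ∀ u : ι → R, Ψ (fun t => g (u t)) = u ⊗ₜ[R] 1 := by
    intro u
    have : ∀ t : ι, (Pi.single t (1 : R) : ι → R) ⊗ₜ[R] g (u t)
        = (Pi.single t (u t) : ι → R) ⊗ₜ[R] (1 : S) := by
      intro t
      have h1 : g (u t) = u t • (1 : S) := by rw [hsmul, mul_one]
      rw [h1, TensorProduct.tmul_smul, TensorProduct.smul_tmul']
      congr 1
      ext s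
      by_cases hst : s = t
      · subst hst; simp
      · simp [hst]
    simp only [Ψ, this, ← TensorProduct.sum_tmul]
    congr 1
    exact Finset.univ_sum_single u
  let π := Submodule.mkQ (LinearMap.range d)
  let Θ : ((ι → R) ⊗[R] S) →ₗ[R] (N ⊗[R] S) := LinearMap.rTensor S π
  have key2 : ∀ v : ι' → S, Θ (Ψ (d' v)) = 0 := by
    intro v
    have hΨsum : ∀ (F : ι' → (ι → S)), Ψ (∑ t, F t) = ∑ t, Ψ (F t) := by
      intro F
      simp only [Ψ, Finset.sum_apply, TensorProduct.tmul_sum]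
      rw [Finset.sum_comm]
    have h0 : d' v = ∑ t : ι', d' (Pi.single t (v t)) := by
      rw [← map_sum]
      congr 1
      exact (Finset.univ_sum_single v).symm
    rw [h0, show Ψ (∑ t : ι', d' (Pi.single t (v t))) =
      ∑ t : ι', Ψ (d' (Pi.single t (v t))) from hΨsum _, map_sum]
    refine Finset.sum_eq_zero fun t _ => ?_
    have hsingle : (Pi.single t (v t) : ι' → S) = v t • (Pi.single t (1 : S) : ι' → S) := by
      ext s
      by_cases hst : s = t
      · subst hst; simp
      · simp [hst]
    rw [hsingle, map_smul]
    have hd1 : d' (fun s => g ((Pi.single t (1:R) : ι' → R) s)) =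
        fun s => g (d (Pi.single t 1) s) := (hcompat (Pi.single t 1)).symm
    have hone : (fun s => g ((Pi.single t (1:R) : ι' → R) s)) = Pi.single t (1 : S) := by
      ext s
      by_cases hst : s = t
      · subst hst; simp
      · simp [hst]
    rw [hone] at hd1
    rw [hd1]
    have hΨv : Ψ (v t • fun s => g (d (Pi.single t 1) s)) =
        (d (Pi.single t 1)) ⊗ₜ[R] (v t) := by
      have : ∀ s : ι, (Pi.single s (1:R) : ι → R) ⊗ₜ[R] (v t * g (d (Pi.single t 1) s))
          = (Pi.single s (d (Pi.single t 1) s) : ι → R) ⊗ₜ[R] (v t) := by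
        intro s
        have h1 : v t * g (d (Pi.single t 1) s) = (d (Pi.single t 1) s) • (v t) := by
          rw [hsmul]; ring
        rw [h1, TensorProduct.tmul_smul, TensorProduct.smul_tmul']
        congr 1
        ext s'
        by_cases hss : s' = s
        · subst hss; simp
        · simp [hss]
      simp only [Ψ, Pi.smul_apply, smul_eq_mul, this, ← TensorProduct.sum_tmul]
      congr 1
      exact Finset.univ_sum_single _
    rw [hΨv]
    have hΘ : Θ ((d (Pi.single t 1)) ⊗ₜ[R] (v t)) = (π (d (Pi.single t 1))) ⊗ₜ[R] (v t) := rfl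
    rw [hΘ]
    have hπ : π (d (Pi.single t 1)) = 0 := by
      rw [Submodule.mkQ_apply, Submodule.Quotient.mk_eq_zero]
      exact LinearMap.mem_range_self d _
    rw [hπ, TensorProduct.zero_tmul]
  have hz : (π u) ⊗ₜ[R] (1 : S) = 0 := by
    have h1 : (π u) ⊗ₜ[R] (1 : S) = Θ (u ⊗ₜ[R] 1) := rfl
    rw [h1, ← key1 u, ← hv, key2]
  have h0 : (π u : N) = 0 := by
    apply hg N
    show (π u) ⊗ₜ[R] (1:S) = (0 : N) ⊗ₜ[R] 1
    rw [hz, TensorProduct.zero_tmul]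
  rw [Submodule.mkQ_apply, Submodule.Quotient.mk_eq_zero] at h0
  exact h0

-- localization helpers
section LocHelpers

variable {R S : Type*} [CommRing R] [CommRing S] (g : R →+* S) {k : ℕ} (y : Fin k → R)

lemma awayInst :
    IsLocalization.Away (g (∏ i, y i)) (Localization.Away (∏ i, g (y i))) := by
  rw [map_prod]
  infer_instance

/-- The induced map on `Away`-localizations of the products. -/
noncomputable def locMap : Localization.Away (∏ i, y i) →+* Localization.Away (∏ i, g (y i)) :=
  haveI := awayInst g y
  IsLocalization.Away.map _ _ g (∏ i, y i)

lemma locMap_algebraMap (a : R) :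
    locMap g y (algebraMap R (Localization.Away (∏ i, y i)) a)
      = algebraMap S (Localization.Away (∏ i, g (y i))) (g a) := by
  haveI := awayInst g y
  unfold locMap IsLocalization.Away.map
  rw [IsLocalization.map_eq]

lemma locMap_invSelf :
    locMap g y (IsLocalization.Away.invSelf (S := Localization.Away (∏ i, y i)) (∏ i, y i))
      = IsLocalization.Away.invSelf (S := Localization.Away (∏ i, g (y i))) (∏ i, g (y i)) := by
  set L' := Localization.Away (∏ i, g (y i))
  set u := locMap g y (IsLocalization.Away.invSelf (S := Localization.Away (∏ i, y i))
    (∏ i, y i)) with hu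
  set v := IsLocalization.Away.invSelf (S := L') (∏ i, g (y i)) with hv
  have h1 : algebraMap S L' (∏ i, g (y i)) * u = 1 := by
    have h0 : algebraMap R (Localization.Away (∏ i, y i)) (∏ i, y i) *
        IsLocalization.Away.invSelf (S := Localization.Away (∏ i, y i)) (∏ i, y i) = 1 :=
      IsLocalization.Away.mul_invSelf _
    have := congrArg (locMap g y) h0
    rw [map_mul, map_one, locMap_algebraMap, map_prod] at this
    exact this
  have h2 : algebraMap S L' (∏ i, g (y i)) * v = 1 := IsLocalization.Away.mul_invSelf _
  calc u = u * (algebraMap S L' (∏ i, g (y i)) * v) := by rw [h2, mul_one]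
    _ = v * (algebraMap S L' (∏ i, g (y i)) * u) := by ring
    _ = v := by rw [h1, mul_one]

lemma locMap_boundaries {v : Localization.Away (∏ i, y i)} (hv : v ∈ cechTopBoundaries y) :
    locMap g y v ∈ cechTopBoundaries (fun j => g (y j)) := by
  classical
  unfold cechTopBoundaries at hv ⊢
  rw [← Submodule.span_iUnion] at hv ⊢
  induction hv using Submodule.span_induction with
  | mem z hz =>
      obtain ⟨j, hj⟩ := Set.mem_iUnion.mp hz
      obtain ⟨r, n, rfl⟩ := hj
      rw [map_mul, locMap_algebraMap, map_pow, locMap_invSelf]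
      refine Submodule.subset_span (Set.mem_iUnion.mpr ⟨j, ?_⟩)
      exact ⟨g r, n, by rw [map_mul, map_pow]⟩
  | zero => rw [map_zero]; exact Submodule.zero_mem _
  | add a b _ _ ha hb => rw [map_add]; exact Submodule.add_mem _ ha hb
  | smul r a _ ha =>
      rw [Algebra.smul_def, map_mul, locMap_algebraMap, ← Algebra.smul_def]
      exact Submodule.smul_mem _ _ ha

lemma away_repr (r : R) (z : Localization.Away r) :
    ∃ (a : R) (n : ℕ), z = algebraMap R (Localization.Away r) a *
      (IsLocalization.Away.invSelf (S := Localization.Away r) r) ^ n := by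
  obtain ⟨⟨a, n⟩, h⟩ : ∃ p : R × ℕ, z * algebraMap R _ (r ^ p.2) = algebraMap R _ p.1 :=
    ⟨IsLocalization.Away.sec r z, IsLocalization.Away.sec_spec r z⟩
  refine ⟨a, n, ?_⟩
  have h2 : algebraMap R (Localization.Away r) r *
      IsLocalization.Away.invSelf (S := Localization.Away r) r = 1 :=
    IsLocalization.Away.mul_invSelf _
  calc z = z * ((algebraMap R (Localization.Away r) r *
        IsLocalization.Away.invSelf (S := Localization.Away r) r) ^ n) := by
        rw [h2, one_pow, mul_one]
    _ = (z * algebraMap R _ (r ^ n)) *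
        (IsLocalization.Away.invSelf (S := Localization.Away r) r) ^ n := by
        rw [map_pow]; ring
    _ = _ := by rw [h]

end LocHelpers

-- ofList / regular sequence helpers
lemma ofList_take_ofFn {R : Type*} [CommRing R] {ℓ : ℕ} (x : Fin ℓ → R) (k : ℕ) (hk : k ≤ ℓ) :
    Ideal.ofList ((List.ofFn x).take k) =
      Ideal.span (Set.range fun j : Fin k => x (Fin.castLE hk j)) := by
  rw [← Fin.ofFn_take_eq_take_ofFn hk]
  unfold Ideal.ofList
  congr 1
  ext r
  simp only [List.mem_ofFn, Set.mem_setOf_eq, Set.mem_range]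
  constructor
  · rintro ⟨j, rfl⟩; exact ⟨j, rfl⟩
  · rintro ⟨j, rfl⟩; exact ⟨j, rfl⟩

lemma reg_extract {R : Type*} [CommRing R] {rs : List R}
    (h : RingTheory.Sequence.IsWeaklyRegular R rs) (k : ℕ) (hk : k < rs.length) {a : R}
    (ha : rs[k] * a ∈ Ideal.ofList (rs.take k)) : a ∈ Ideal.ofList (rs.take k) := by
  have hreg := h.regular_mod_prev k hk
  set J := Ideal.ofList (rs.take k) with hJ
  have hJT : (J • ⊤ : Submodule R R) = J := by rw [smul_eq_mul, Ideal.mul_top]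
  have h0 : rs[k] • (Submodule.Quotient.mk a : R ⧸ (J • ⊤ : Submodule R R)) = rs[k] • 0 := by
    rw [smul_zero, ← Submodule.Quotient.mk_smul, Submodule.Quotient.mk_eq_zero, hJT,
      smul_eq_mul]
    exact ha
  have := hreg h0
  rwa [Submodule.Quotient.mk_eq_zero, hJT] at this

-- ===== direct-limit helpers =====
section DLHelpers

variable {ι : Type} [Preorder ι] [IsDirected ι (· ≤ ·)] [Nonempty ι]
  {G : ι → Type} [∀ i, CommRing (G i)]
  (f : ∀ i j : ι, i ≤ j → G i →+* G j)
  [DirectedSystem G (fun i j h => f i j h)]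

local notation "A" => Ring.DirectLimit G (fun i j h => f i j h)
local notation "of" => Ring.DirectLimit.of G (fun i j h => f i j h)

lemma DL.eq_at_stage {i : ι} {a b : G i} (h : of i a = of i b) :
    ∃ j hj, f i j hj a = f i j hj b := by
  have h0 : of i (a - b) = 0 := by rw [map_sub, h, sub_self]
  obtain ⟨j, hj, hab⟩ := Ring.DirectLimit.of.zero_exact h0
  exact ⟨j, hj, by rwa [map_sub, sub_eq_zero] at hab⟩

lemma DL.exists_stage_fun {κ : Type} [Fintype κ] (v : κ → A) (i0 : ι) :
    ∃ (i : ι) (_ : i0 ≤ i) (w : κ → G i), ∀ k, of i (w k) = v k := by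
  classical
  choose s w hw using fun k => Ring.DirectLimit.exists_of (v k)
  obtain ⟨i, hi⟩ := (insert i0 (Finset.univ.image s)).exists_le
  have hi0 : i0 ≤ i := hi i0 (Finset.mem_insert_self _ _)
  have his : ∀ k, s k ≤ i := fun k =>
    hi (s k) (Finset.mem_insert_of_mem (Finset.mem_image_of_mem s (Finset.mem_univ k)))
  exact ⟨i, hi0, fun k => f (s k) i (his k) (w k), fun k => by
    rw [Ring.DirectLimit.of_f, hw]⟩

lemma DL.eqs_at_stage {κ : Type} [Fintype κ] {i : ι} (a b : κ → G i)
    (h : ∀ k, of i (a k) = of i (b k)) :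
    ∃ (j : ι) (hj : i ≤ j), ∀ k, f i j hj (a k) = f i j hj (b k) := by
  classical
  choose s hs hab using fun k => DL.eq_at_stage f (h k)
  obtain ⟨j, hj⟩ := (insert i (Finset.univ.image s)).exists_le
  have hij : i ≤ j := hj i (Finset.mem_insert_self _ _)
  have hsj : ∀ k, s k ≤ j := fun k =>
    hj (s k) (Finset.mem_insert_of_mem (Finset.mem_image_of_mem s (Finset.mem_univ k)))
  refine ⟨j, hij, fun k => ?_⟩
  have h1 := congrArg (f (s k) j (hsj k)) (hab k)
  rwa [DirectedSystem.map_map (f := fun i j h => (f i j h : G i → G j)) (hs k) (hsj k),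
    DirectedSystem.map_map (f := fun i j h => (f i j h : G i → G j)) (hs k) (hsj k)] at h1

end DLHelpers

-- primed versions avoiding beta-reduction issues
lemma koszulD_ringHom' {R S : Type*} [CommRing R] [CommRing S] (g : R →+* S) {ℓ : ℕ}
    (x : Fin ℓ → R) (x' : Fin ℓ → S) (hx : ∀ j, g (x j) = x' j) (p : ℕ)
    (v : {s : Finset (Fin ℓ) // s.card = p + 1} → R) :
    (fun t => g (koszulD x p v t)) = koszulD x' p (fun t => g (v t)) := by
  have h := koszulD_ringHom g x p v
  rwa [show (fun j => g (x j)) = x' from funext hx] at h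

lemma koszulTransition_ringHom' {R S : Type*} [CommRing R] [CommRing S] (g : R →+* S) {ℓ : ℕ}
    (x : Fin ℓ → R) (x' : Fin ℓ → S) (hx : ∀ j, g (x j) = x' j) (e p : ℕ)
    (v : {s : Finset (Fin ℓ) // s.card = p} → R) :
    (fun t => g (koszulTransition x e p v t)) =
      koszulTransition x' e p (fun t => g (v t)) := by
  have h := koszulTransition_ringHom g x e p v
  rwa [show (fun j => g (x j)) = x' from funext hx] at h

section Descend

variable {ι : Type} [Preorder ι] [IsDirected ι (· ≤ ·)] [Nonempty ι]
  {G : ι → Type} [∀ i, CommRing (G i)]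
  (f : ∀ i j : ι, i ≤ j → G i →+* G j)
  [DirectedSystem G (fun i j h => f i j h)]

local notation "A" => Ring.DirectLimit G (fun i j h => f i j h)
local notation "of" => Ring.DirectLimit.of G (fun i j h => f i j h)

theorem param_descend (hpure : ∀ (i j : ι) (h : i ≤ j), IsPureRingHom (f i j h))
    (δ : ι) {k : ℕ} (y : Fin k → G δ)
    (h : IsParameterSeq (fun j => of δ (y j))) : IsParameterSeq y := by
  classical
  obtain ⟨hwpr, hproper, hsupp⟩ := h
  refine ⟨?_, ?_, ?_⟩
  · -- (1) weak proregularity descends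
    intro n hn
    obtain ⟨m, hmn, hm⟩ := hwpr n hn
    refine ⟨m, hmn, ?_⟩
    intro i z hz
    -- the image of z is a cycle over the colimit
    have hcycle : koszulD (fun j => (of δ (y j) : A) ^ m) i (fun t => of δ (z t)) = 0 := by
      have h1 := koszulD_ringHom' (of δ) (fun j => y j ^ m)
        (fun j => (of δ (y j) : A) ^ m) (fun j => by rw [map_pow]) i z
      rw [hz] at h1
      rw [← h1]
      funext t
      simp
    obtain ⟨w, hw⟩ := hm i (fun t => of δ (z t)) hcycle
    obtain ⟨ε, hδε, w₀, hw₀⟩ := DL.exists_stage_fun f w δ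
    -- the equation holds at a stage ε' ≥ ε
    have hofab : ∀ t, of ε (koszulD (fun j => (f δ ε hδε (y j)) ^ n) (i+1) w₀ t)
        = of ε (f δ ε hδε (koszulTransition y (m - n) (i+1) z t)) := by
      intro t
      have hL := congrFun (koszulD_ringHom' (of ε) (fun j => (f δ ε hδε (y j)) ^ n)
        (fun j => (of δ (y j) : A) ^ n)
        (fun j => by rw [map_pow, Ring.DirectLimit.of_f]) (i+1) w₀) t
      have hwfun : (fun t => (of ε (w₀ t) : A)) = w := funext hw₀
      rw [hwfun] at hL
      have hR := congrFun (koszulTransition_ringHom' (of δ) y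
        (fun j => (of δ (y j) : A)) (fun j => rfl) (m-n) (i+1) z) t
      rw [hL, Ring.DirectLimit.of_f, hR]
      exact congrFun hw t
    obtain ⟨ε', hεε', heq⟩ := DL.eqs_at_stage f _ _ hofab
    have hδε' : δ ≤ ε' := le_trans hδε hεε'
    have hveq : koszulD (fun j => (f δ ε' hδε' (y j)) ^ n) (i+1) (fun t => f ε ε' hεε' (w₀ t))
        = fun t => f δ ε' hδε' (koszulTransition y (m-n) (i+1) z t) := by
      funext t
      have h1 := congrFun (koszulD_ringHom' (f ε ε' hεε') (fun j => (f δ ε hδε (y j)) ^ n)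
        (fun j => (f δ ε' hδε' (y j)) ^ n)
        (fun j => by
          rw [map_pow, DirectedSystem.map_map (f := fun i j h => (f i j h : G i → G j))])
        (i+1) w₀) t
      rw [← h1, heq t,
        DirectedSystem.map_map (f := fun i j h => (f i j h : G i → G j))]
    have hcompat : ∀ u, (fun t => f δ ε' hδε' (koszulD (fun j => y j ^ n) (i+1) u t))
        = koszulD (fun j => (f δ ε' hδε' (y j)) ^ n) (i+1) (fun t => f δ ε' hδε' (u t)) :=
      fun u => koszulD_ringHom' (f δ ε' hδε') (fun j => y j ^ n)
        (fun j => (f δ ε' hδε' (y j)) ^ n) (fun j => by rw [map_pow]) (i+1) u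
    exact (hpure δ ε' hδε').exists_preimage
      (koszulD (fun j => y j ^ n) (i+1)) (koszulD (fun j => (f δ ε' hδε' (y j)) ^ n) (i+1))
      hcompat (koszulTransition y (m-n) (i+1) z) (fun t => f ε ε' hεε' (w₀ t)) hveq
  · -- (2) properness descends
    intro htop
    apply hproper
    rw [Ideal.eq_top_iff_one] at htop ⊢
    have h1 : (1 : A) ∈ Ideal.map (of δ) (Ideal.span (Set.range y)) := by
      have := Ideal.mem_map_of_mem (of δ) htop
      rwa [map_one] at this
    rw [Ideal.map_span] at h1
    have h2 : (of δ) '' Set.range y = Set.range fun j => of δ (y j) := by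
      rw [← Set.range_comp]; rfl
    rwa [h2] at h1
  · -- (3) support condition descends
    intro P hP hPy
    let T : Submonoid A :=
      { carrier := (fun s => (of δ s : A)) '' {s | s ∉ P}
        mul_mem' := by
          rintro _ _ ⟨a, ha, rfl⟩ ⟨b, hb, rfl⟩
          exact ⟨a * b, fun hab => ((hP.mem_or_mem hab).elim ha hb), map_mul _ a b⟩
        one_mem' := ⟨1, (Ideal.ne_top_iff_one P).mp hP.ne_top, map_one _⟩ }
    have hdisj : Disjoint (↑(Ideal.span (Set.range fun j => (of δ (y j) : A))) : Set A)
        (T : Set A) := by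
      rw [Set.disjoint_left]
      rintro t ht ⟨s, hs, rfl⟩
      rw [SetLike.mem_coe, Ideal.mem_span_range_iff_exists_fun] at ht
      obtain ⟨c, hc⟩ := ht
      obtain ⟨ε, hδε, c₀, hc₀⟩ := DL.exists_stage_fun f c δ
      have hceq : of ε (∑ j, c₀ j * f δ ε hδε (y j)) = of ε (f δ ε hδε s) := by
        rw [map_sum, Ring.DirectLimit.of_f]
        calc ∑ j, of ε (c₀ j * f δ ε hδε (y j))
            = ∑ j, c j * of δ (y j) := by
              refine Finset.sum_congr rfl fun j _ => ?_
              rw [map_mul, hc₀, Ring.DirectLimit.of_f]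
          _ = of δ s := hc
      obtain ⟨ε', hεε', heq⟩ := DL.eq_at_stage f hceq
      have hδε' : δ ≤ ε' := le_trans hδε hεε'
      have hkey : f δ ε' hδε' s = ∑ j, (f ε ε' hεε' (c₀ j)) * f δ ε' hδε' (y j) := by
        rw [← DirectedSystem.map_map (f := fun i j h => (f i j h : G i → G j)) hδε hεε',
          ← heq, map_sum]
        refine Finset.sum_congr rfl fun j _ => ?_
        rw [map_mul, DirectedSystem.map_map (f := fun i j h => (f i j h : G i → G j))]
      -- purity gives s ∈ P, contradiction
      letI : Module (G δ) (G ε') := (f δ ε' hδε').toModule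
      have hsmul : ∀ (r : G δ) (t : G ε'), r • t = f δ ε' hδε' r * t := fun r t => rfl
      have htensor : (Submodule.Quotient.mk s : G δ ⧸ (P : Submodule (G δ) (G δ)))
          ⊗ₜ[G δ] (1 : G ε') = 0 := by
        have e1 : (Submodule.Quotient.mk s : G δ ⧸ (P : Submodule (G δ) (G δ)))
            = s • (Submodule.Quotient.mk 1) := by
          rw [← Submodule.Quotient.mk_smul]
          congr 1
          rw [smul_eq_mul, mul_one]
        rw [e1, TensorProduct.smul_tmul]
        have e2 : (s • (1 : G ε')) = f δ ε' hδε' s := by rw [hsmul, mul_one]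
        rw [e2, hkey, TensorProduct.tmul_sum]
        refine Finset.sum_eq_zero fun j _ => ?_
        have e3 : (f ε ε' hεε' (c₀ j)) * f δ ε' hδε' (y j)
            = y j • (f ε ε' hεε' (c₀ j)) := by rw [hsmul]; ring
        rw [e3, ← TensorProduct.smul_tmul]
        have e4 : (y j • (Submodule.Quotient.mk 1 : G δ ⧸ (P : Submodule (G δ) (G δ)))) = 0 := by
          rw [← Submodule.Quotient.mk_smul, Submodule.Quotient.mk_eq_zero]
          show y j • 1 ∈ P
          rw [smul_eq_mul, mul_one]
          exact hPy (Ideal.subset_span ⟨j, rfl⟩)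
        rw [e4, TensorProduct.zero_tmul]
      have hs0 : s ∈ P := by
        have hinj := hpure δ ε' hδε' (G δ ⧸ (P : Submodule (G δ) (G δ)))
        have h0 : (Submodule.Quotient.mk s : G δ ⧸ (P : Submodule (G δ) (G δ))) = 0 := by
          apply hinj
          show _ ⊗ₜ[G δ] (1 : G ε') = (0 : G δ ⧸ (P : Submodule (G δ) (G δ))) ⊗ₜ[G δ] 1
          rw [htensor, TensorProduct.zero_tmul]
        rwa [Submodule.Quotient.mk_eq_zero] at h0
      exact hs hs0
    obtain ⟨Q, hQprime, hQx, hQT⟩ := Ideal.exists_le_prime_disjoint _ T hdisj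
    obtain ⟨zA, hzA⟩ := hsupp Q hQprime hQx
    obtain ⟨a, n, hzAeq⟩ := away_repr _ zA
    by_contra hno
    push_neg at hno
    obtain ⟨s, hsP, hsB⟩ := hno
      ((IsLocalization.Away.invSelf (S := Localization.Away (∏ i, y i)) (∏ i, y i)) ^ n)
    have hmap := locMap_boundaries (of δ) y hsB
    have hχ : locMap (of δ) y
        (s • (IsLocalization.Away.invSelf (S := Localization.Away (∏ i, y i)) (∏ i, y i)) ^ n)
        = (of δ s : A) • (IsLocalization.Away.invSelf
            (S := Localization.Away (∏ i, (of δ (y i) : A))) (∏ i, (of δ (y i) : A))) ^ n := by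
      rw [Algebra.smul_def, map_mul, locMap_algebraMap, map_pow, locMap_invSelf,
        ← Algebra.smul_def]
    rw [hχ] at hmap
    have hsT : (of δ s : A) ∈ T := ⟨s, hsP, rfl⟩
    have hsQ : (of δ s : A) ∉ Q := fun hmem => Set.disjoint_left.mp hQT hmem hsT
    apply hzA (of δ s) hsQ
    rw [hzAeq]
    have hrearr : (of δ s : A) • (algebraMap A (Localization.Away (∏ i, (of δ (y i) : A))) a *
        (IsLocalization.Away.invSelf (S := Localization.Away (∏ i, (of δ (y i) : A)))
          (∏ i, (of δ (y i) : A))) ^ n)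
        = a • ((of δ s : A) • (IsLocalization.Away.invSelf
            (S := Localization.Away (∏ i, (of δ (y i) : A))) (∏ i, (of δ (y i) : A))) ^ n) := by
      have h1 : algebraMap A (Localization.Away (∏ i, (of δ (y i) : A))) a *
          (IsLocalization.Away.invSelf (S := Localization.Away (∏ i, (of δ (y i) : A)))
            (∏ i, (of δ (y i) : A))) ^ n
          = a • (IsLocalization.Away.invSelf (S := Localization.Away (∏ i, (of δ (y i) : A)))
            (∏ i, (of δ (y i) : A))) ^ n := (Algebra.smul_def a _).symm
      rw [h1]
      exact smul_comm _ _ _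
    rw [hrearr]
    exact Submodule.smul_mem _ _ hmap

end Descend

/-- Let `{A_γ}` be a direct system of commutative rings over a directed
index set with pure transition maps.  If every `A_γ` is Cohen–Macaulay in the sense of
Hamilton–Marley, then so is the direct limit. -/
theorem directLimit_hamiltonMarley_cohenMacaulay_of_pure
    {ι : Type} [Preorder ι] [IsDirected ι (· ≤ ·)] [Nonempty ι]
    (G : ι → Type) [∀ i, CommRing (G i)]
    (f : ∀ i j : ι, i ≤ j → G i →+* G j)
    (hsys : DirectedSystem G (fun _ _ h => f _ _ h))
    (hpure : ∀ (i j : ι) (h : i ≤ j), IsPureRingHom (f i j h))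
    (hCM : ∀ i, IsHamiltonMarleyCohenMacaulay (G i)) :
    IsHamiltonMarleyCohenMacaulay (Ring.DirectLimit G (fun i j h => f i j h)) := by
  haveI : DirectedSystem G (fun i j h => f i j h) := hsys
  classical
  intro ℓ x hx
  -- nontriviality of the stages
  have hnontriv : ∀ i : ι, (1 : G i) ≠ 0 := by
    intro i h10
    have hreg := hCM i 0 Fin.elim0 (fun n hn hpos => absurd hpos (by omega))
    apply hreg.top_ne_smul
    haveI : Subsingleton (G i) := subsingleton_of_zero_eq_one h10.symm
    exact Subsingleton.elim _ _
  have hA1 : (1 : Ring.DirectLimit G (fun i j h => f i j h)) ≠ 0 := by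
    intro h10
    have i0 := Classical.arbitrary ι
    have h1 : Ring.DirectLimit.of G (fun i j h => f i j h) i0 1 = 0 := by
      rw [map_one]; exact h10
    obtain ⟨j, hj, hf⟩ := Ring.DirectLimit.of.zero_exact h1
    rw [map_one] at hf
    exact hnontriv j hf
  -- lift x to a stage γ
  obtain ⟨γ, -, y, hy⟩ := DL.exists_stage_fun f x (Classical.arbitrary ι)
  -- strong parameter sequence at every stage ≥ γ
  have hstrong : ∀ (ε : ι) (hγε : γ ≤ ε),
      IsStrongParameterSeq (fun j : Fin ℓ => f γ ε hγε (y j)) := by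
    intro ε hγε i hi hpos
    have hfun : (fun j : Fin i =>
        (Ring.DirectLimit.of G (fun i j h => f i j h) ε (f γ ε hγε (y (Fin.castLE hi j))) : Ring.DirectLimit G (fun i j h => f i j h)))
        = fun j => x (Fin.castLE hi j) :=
      funext fun j => by rw [Ring.DirectLimit.of_f, hy]
    have hxi := hx i hi hpos
    rw [← hfun] at hxi
    exact param_descend f hpure ε _ hxi
  constructor
  · -- weak regularity
    constructor
    intro k hk
    have hkl : k < ℓ := by simpa using hk
    have hkle : k ≤ ℓ := hkl.le
    set J := Ideal.ofList ((List.ofFn x).take k) with hJdef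
    have hJ : J = Ideal.span (Set.range fun j : Fin k => x (Fin.castLE hkle j)) :=
      ofList_take_ofFn x k hkle
    have hJT : (J • ⊤ : Submodule (Ring.DirectLimit G (fun i j h => f i j h)) (Ring.DirectLimit G (fun i j h => f i j h))) = J := by rw [smul_eq_mul, Ideal.mul_top]
    have hgetElem : (List.ofFn x)[k]'hk = x ⟨k, hkl⟩ := List.getElem_ofFn hk
    rw [hgetElem]
    -- reduce to the kernel statement
    have key : ∀ a : Ring.DirectLimit G (fun i j h => f i j h), x ⟨k, hkl⟩ * a ∈ J → a ∈ J := by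
      intro a ha
      rw [hJ] at ha
      rw [Ideal.mem_span_range_iff_exists_fun] at ha
      obtain ⟨c, hc⟩ := ha
      -- push everything to a common stage
      obtain ⟨ε₁, -, c₀, hc₀⟩ := DL.exists_stage_fun f c γ
      obtain ⟨ε₂, a₀, ha₀⟩ := Ring.DirectLimit.exists_of a
      obtain ⟨ε, hεall⟩ := ({γ, ε₁, ε₂} : Finset ι).exists_le
      have hγε : γ ≤ ε := hεall γ (by simp)
      have hε₁ε : ε₁ ≤ ε := hεall ε₁ (by simp)
      have hε₂ε : ε₂ ≤ ε := hεall ε₂ (by simp)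
      set y' : Fin ℓ → G ε := fun j => f γ ε hγε (y j) with hy'
      set c' : Fin k → G ε := fun j => f ε₁ ε hε₁ε (c₀ j) with hc'
      set a' : G ε := f ε₂ ε hε₂ε a₀ with ha'
      have hofy' : ∀ j, Ring.DirectLimit.of G (fun i j h => f i j h) ε (y' j) = x j :=
        fun j => by rw [hy', Ring.DirectLimit.of_f, hy]
      have hofc' : ∀ j, Ring.DirectLimit.of G (fun i j h => f i j h) ε (c' j) = c j :=
        fun j => by rw [hc', Ring.DirectLimit.of_f, hc₀]
      have hofa' : Ring.DirectLimit.of G (fun i j h => f i j h) ε a' = a := by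
        rw [ha', Ring.DirectLimit.of_f, ha₀]
      have hzero : Ring.DirectLimit.of G (fun i j h => f i j h) ε
          (y' ⟨k, hkl⟩ * a' - ∑ j, c' j * y' (Fin.castLE hkle j)) = 0 := by
        rw [map_sub, map_mul, map_sum, hofy', hofa']
        have : ∀ j ∈ Finset.univ, Ring.DirectLimit.of G (fun i j h => f i j h) ε
            (c' j * y' (Fin.castLE hkle j)) = c j * x (Fin.castLE hkle j) :=
          fun j _ => by rw [map_mul, hofc', hofy']
        rw [Finset.sum_congr rfl this, hc, sub_self]
      obtain ⟨ε', hεε', hzero'⟩ := Ring.DirectLimit.of.zero_exact hzero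
      have hγε' : γ ≤ ε' := le_trans hγε hεε'
      set y'' : Fin ℓ → G ε' := fun j => f γ ε' hγε' (y j) with hy''
      have hy''eq : ∀ j, f ε ε' hεε' (y' j) = y'' j := fun j => by
        rw [hy', hy'',
          DirectedSystem.map_map (f := fun i j h => (f i j h : G i → G j))]
      have hrel : y'' ⟨k, hkl⟩ * (f ε ε' hεε' a') =
          ∑ j, (f ε ε' hεε' (c' j)) * y'' (Fin.castLE hkle j) := by
        rw [map_sub, map_mul, map_sum, sub_eq_zero] at hzero'
        rw [hy''eq] at hzero'
        rw [hzero']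
        exact Finset.sum_congr rfl fun j _ => by rw [map_mul, hy''eq]
      -- use Cohen–Macaulayness at stage ε'
      have hregstage := hCM ε' ℓ y'' (hstrong ε' hγε')
      have hlen : k < (List.ofFn y'').length := by simpa using hkl
      have hmem : (List.ofFn y'')[k] * (f ε ε' hεε' a') ∈
          Ideal.ofList ((List.ofFn y'').take k) := by
        rw [List.getElem_ofFn hlen, ofList_take_ofFn y'' k hkle,
          Ideal.mem_span_range_iff_exists_fun]
        exact ⟨fun j => f ε ε' hεε' (c' j), hrel.symm⟩
      have hstage := reg_extract hregstage.toIsWeaklyRegular k hlen hmem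
      rw [ofList_take_ofFn y'' k hkle] at hstage
      -- map back to the limit
      have hmap : Ring.DirectLimit.of G (fun i j h => f i j h) ε' (f ε ε' hεε' a') ∈
          Ideal.map (Ring.DirectLimit.of G (fun i j h => f i j h) ε')
            (Ideal.span (Set.range fun j : Fin k => y'' (Fin.castLE hkle j))) :=
        Ideal.mem_map_of_mem _ hstage
      rw [Ideal.map_span] at hmap
      have himg : (Ring.DirectLimit.of G (fun i j h => f i j h) ε') ''
          (Set.range fun j : Fin k => y'' (Fin.castLE hkle j)) =
          Set.range fun j : Fin k => x (Fin.castLE hkle j) := by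
        rw [← Set.range_comp]
        refine congrArg Set.range (funext fun j => ?_)
        show Ring.DirectLimit.of G (fun i j h => f i j h) ε' (y'' (Fin.castLE hkle j))
          = x (Fin.castLE hkle j)
        rw [hy'', Ring.DirectLimit.of_f, hy]
      rw [himg] at hmap
      have hofa'' : Ring.DirectLimit.of G (fun i j h => f i j h) ε' (f ε ε' hεε' a') = a := by
        rw [Ring.DirectLimit.of_f, hofa']
      rwa [hofa'', ← hJ] at hmap
    -- conclude smul-regularity on the quotient
    intro u v huv
    obtain ⟨au, rfl⟩ := Submodule.Quotient.mk_surjective _ u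
    obtain ⟨av, rfl⟩ := Submodule.Quotient.mk_surjective _ v
    rw [← sub_eq_zero, ← Submodule.Quotient.mk_sub, Submodule.Quotient.mk_eq_zero, hJT]
    have hsub : x ⟨k, hkl⟩ * (au - av) ∈ J := by
      have h0 : Submodule.Quotient.mk (p := (J • ⊤ : Submodule (Ring.DirectLimit G (fun i j h => f i j h)) (Ring.DirectLimit G (fun i j h => f i j h))))
          (x ⟨k, hkl⟩ * (au - av)) = 0 := by
        rw [mul_sub, Submodule.Quotient.mk_sub]
        rw [show (x ⟨k, hkl⟩ * au : Ring.DirectLimit G (fun i j h => f i j h)) = x ⟨k, hkl⟩ • au from rfl,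
          show (x ⟨k, hkl⟩ * av : Ring.DirectLimit G (fun i j h => f i j h)) = x ⟨k, hkl⟩ • av from rfl,
          Submodule.Quotient.mk_smul, Submodule.Quotient.mk_smul]
        have huv' : x ⟨k, hkl⟩ • (Submodule.Quotient.mk au :
            Ring.DirectLimit G (fun i j h => f i j h) ⧸ (J • ⊤ :
              Submodule (Ring.DirectLimit G (fun i j h => f i j h))
                (Ring.DirectLimit G (fun i j h => f i j h)))) =
            x ⟨k, hkl⟩ • Submodule.Quotient.mk av := huv
        rw [huv', sub_self]
      rwa [Submodule.Quotient.mk_eq_zero, hJT] at h0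
    exact key _ hsub
  · -- properness of the full ideal
    intro htop
    have hofList : Ideal.ofList (List.ofFn x) =
        Ideal.span (Set.range x) := by
      unfold Ideal.ofList
      congr 1
      ext r
      simp [List.mem_ofFn]
    rw [hofList, smul_eq_mul, Ideal.mul_top] at htop
    rcases Nat.eq_zero_or_pos ℓ with hℓ | hℓ
    · haveI : IsEmpty (Fin ℓ) := by subst hℓ; infer_instance
      rw [Set.range_eq_empty x, Ideal.span_empty] at htop
      have h1 : (1 : Ring.DirectLimit G (fun i j h => f i j h)) ∈
          (⊥ : Ideal (Ring.DirectLimit G (fun i j h => f i j h))) :=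
        htop ▸ Submodule.mem_top
      exact hA1 (by simpa using h1)
    · have hproper := (hx ℓ le_rfl hℓ).2.1
      have hid : (fun j : Fin ℓ => x (Fin.castLE le_rfl j)) = x :=
        funext fun j => congrArg x (Fin.ext rfl)
      rw [hid] at hproper
      exact hproper htop.symm
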